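/- arXiv:1407.4479 — 2 statements merged into one kernel-verified Lean document; each statement's English description precedes it below -/
import Mathlib

section
/- Let n > 1 be an integer and s > 1 a real number. Then Σ_{c=1}^∞ μ(nc)/(nc)^s = (μ(n)/(n^s − 1)) · Σ_{d | n, d ≠ n} μ(d) · (Σ_{c=1}^∞ μ(cd)/(cd)^s). -/
open ArithmeticFunction Finset

private lemma pnat_summable_rpow {s : ℝ} (hs : 1 < s) :
    Summable (fun m : ℕ+ => (((m : ℕ) : ℝ) ^ s)⁻¹) :=
  (Real.summable_nat_rpow_inv.mpr hs).comp_injective PNat.coe_injective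

private lemma moebius_term_bound {s : ℝ} (hs : 1 < s) (k : ℕ) (m : ℕ+) (hmk : (m : ℕ) ≤ k) :
    |(moebius k : ℝ) / (k : ℝ) ^ s| ≤ (((m : ℕ) : ℝ) ^ s)⁻¹ := by
  have hm0 : (0 : ℝ) < (m : ℕ) := by exact_mod_cast m.pos
  have hk0 : (0 : ℝ) < (k : ℝ) := lt_of_lt_of_le hm0 (by exact_mod_cast hmk)
  have hks : (0 : ℝ) < (k : ℝ) ^ s := Real.rpow_pos_of_pos hk0 s
  have hms : (0 : ℝ) < ((m : ℕ) : ℝ) ^ s := Real.rpow_pos_of_pos hm0 s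
  have hmu : |(moebius k : ℝ)| ≤ 1 := by
    have := abs_moebius_le_one (n := k)
    calc |(moebius k : ℝ)| = ((|moebius k| : ℤ) : ℝ) := by push_cast; rfl
    _ ≤ 1 := by exact_mod_cast this
  have hle : ((m : ℕ) : ℝ) ^ s ≤ (k : ℝ) ^ s :=
    Real.rpow_le_rpow hm0.le (by exact_mod_cast hmk) (by linarith)
  rw [abs_div, abs_of_pos hks, div_le_iff₀ hks]
  calc |(moebius k : ℝ)| ≤ 1 := hmu
  _ ≤ (((m : ℕ) : ℝ) ^ s)⁻¹ * (k : ℝ) ^ s := by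
      rw [le_inv_mul_iff₀ hms, mul_one]; exact hle

theorem moebius_series_recursion (n : ℕ) (hn : 1 < n) (s : ℝ) (hs : 1 < s) :
    ∑' c : ℕ+, (moebius (n * c) : ℝ) / ((n * c : ℕ) : ℝ) ^ s =
      (moebius n : ℝ) / ((n : ℝ) ^ s - 1) *
        ∑ d ∈ n.properDivisors,
          (moebius d : ℝ) * ∑' c : ℕ+, (moebius (c * d) : ℝ) / ((c * d : ℕ) : ℝ) ^ s := by
  have hn0 : n ≠ 0 := by omega
  set F : ℕ → ℝ := fun d => ∑' c : ℕ+, (moebius (c * d) : ℝ) / ((c * d : ℕ) : ℝ) ^ s with hF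
  set G : ℝ := ∑' m : ℕ+,
      (if Nat.Coprime n (m : ℕ) then (moebius (m : ℕ) : ℝ) / ((m : ℕ) : ℝ) ^ s else 0) with hG
  -- LHS is F n
  have hLHS : ∑' c : ℕ+, (moebius (n * c) : ℝ) / ((n * c : ℕ) : ℝ) ^ s = F n := by
    rw [hF]
    exact tsum_congr fun c => by rw [mul_comm n (c : ℕ)]
  -- summability of the indicator function
  have hsummable : ∀ d : ℕ, Summable (fun m : ℕ+ =>
      (if d ∣ (m : ℕ) then (moebius (m : ℕ) : ℝ) / ((m : ℕ) : ℝ) ^ s else 0)) := by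
    intro d
    apply Summable.of_norm_bounded (pnat_summable_rpow hs)
    intro m
    rw [Real.norm_eq_abs]
    by_cases h : d ∣ (m : ℕ)
    · rw [if_pos h]; exact moebius_term_bound hs (m : ℕ) m le_rfl
    · rw [if_neg h, abs_zero]
      positivity
  -- reindexing: F d as a sum over all of ℕ+
  have hreindex : ∀ d : ℕ, d ∈ n.divisors → F d = ∑' m : ℕ+,
      (if d ∣ (m : ℕ) then (moebius (m : ℕ) : ℝ) / ((m : ℕ) : ℝ) ^ s else 0) := by
    intro d hd
    have hd0 : 0 < d := Nat.pos_of_mem_divisors hd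
    set dp : ℕ+ := ⟨d, hd0⟩ with hdp
    have hinj : Function.Injective (fun c : ℕ+ => c * dp) := mul_left_injective dp
    have hsupp : Function.support (fun m : ℕ+ =>
        (if d ∣ (m : ℕ) then (moebius (m : ℕ) : ℝ) / ((m : ℕ) : ℝ) ^ s else 0)) ⊆
        Set.range (fun c : ℕ+ => c * dp) := by
      intro m hm
      have hdvd : d ∣ (m : ℕ) := by
        by_contra h
        exact hm (if_neg h)
      obtain ⟨k, hk⟩ := hdvd
      have hk0 : 0 < k := by
        rcases Nat.eq_zero_or_pos k with rfl | h
        · exfalso; have := m.pos; omega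
        · exact h
      refine ⟨⟨k, hk0⟩, ?_⟩
      apply PNat.coe_injective
      simp [hdp, hk, mul_comm]
      exact Nat.mul_comm k d
    have := hinj.tsum_eq hsupp
    rw [hF, ← this]
    refine tsum_congr fun c => ?_
    have hcoe : ((c * dp : ℕ+) : ℕ) = (c : ℕ) * d := by simp [hdp]; rfl
    simp only [hcoe]
    rw [if_pos ⟨(c : ℕ), by ring⟩]
  -- the divisor-sum of moebius
  have hmoeb_sum : ∀ k : ℕ, k ≠ 0 →
      (∑ d ∈ k.divisors, (moebius d : ℝ)) = if k = 1 then 1 else 0 := by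
    intro k hk
    have h1 : (moebius * (zeta : ArithmeticFunction ℤ)) k = (1 : ArithmeticFunction ℤ) k := by
      rw [moebius_mul_coe_zeta]
    rw [coe_mul_zeta_apply, one_apply] at h1
    calc (∑ d ∈ k.divisors, (moebius d : ℝ))
        = ((∑ d ∈ k.divisors, moebius d : ℤ) : ℝ) := by push_cast; rfl
      _ = ((if k = 1 then 1 else 0 : ℤ) : ℝ) := by rw [h1]
      _ = if k = 1 then 1 else 0 := by split <;> simp
  -- swap: sum over divisors equals G
  have hswap : ∑ d ∈ n.divisors, (moebius d : ℝ) * F d = G := by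
    calc ∑ d ∈ n.divisors, (moebius d : ℝ) * F d
        = ∑ d ∈ n.divisors, ∑' m : ℕ+, (moebius d : ℝ) *
            (if d ∣ (m : ℕ) then (moebius (m : ℕ) : ℝ) / ((m : ℕ) : ℝ) ^ s else 0) := by
          refine Finset.sum_congr rfl fun d hd => ?_
          rw [hreindex d hd, tsum_mul_left]
      _ = ∑' m : ℕ+, ∑ d ∈ n.divisors, (moebius d : ℝ) *
            (if d ∣ (m : ℕ) then (moebius (m : ℕ) : ℝ) / ((m : ℕ) : ℝ) ^ s else 0) := by
          exact (Summable.tsum_finsetSum fun d _ => (hsummable d).mul_left _).symm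
      _ = G := by
          rw [hG]
          refine tsum_congr fun m => ?_
          have hfilter : n.divisors.filter (fun d => d ∣ (m : ℕ)) = (Nat.gcd n (m : ℕ)).divisors := by
            ext a
            simp only [Finset.mem_filter, Nat.mem_divisors, Nat.dvd_gcd_iff]
            constructor
            · rintro ⟨⟨h1, _⟩, h2⟩
              exact ⟨⟨h1, h2⟩, fun hg => by
                have := Nat.gcd_eq_zero_iff.mp hg
                exact hn0 this.1⟩
            · rintro ⟨⟨h1, h2⟩, _⟩
              exact ⟨⟨h1, hn0⟩, h2⟩
          calc ∑ d ∈ n.divisors, (moebius d : ℝ) *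
              (if d ∣ (m : ℕ) then (moebius (m : ℕ) : ℝ) / ((m : ℕ) : ℝ) ^ s else 0)
              = ∑ d ∈ n.divisors, (if d ∣ (m : ℕ) then (moebius d : ℝ) *
                  ((moebius (m : ℕ) : ℝ) / ((m : ℕ) : ℝ) ^ s) else 0) := by
                refine Finset.sum_congr rfl fun d _ => ?_
                by_cases h : d ∣ (m : ℕ) <;> simp [h]
            _ = ∑ d ∈ n.divisors.filter (fun d => d ∣ (m : ℕ)), (moebius d : ℝ) *
                  ((moebius (m : ℕ) : ℝ) / ((m : ℕ) : ℝ) ^ s) := (Finset.sum_filter _ _).symm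
            _ = (∑ d ∈ (Nat.gcd n (m : ℕ)).divisors, (moebius d : ℝ)) *
                  ((moebius (m : ℕ) : ℝ) / ((m : ℕ) : ℝ) ^ s) := by
                rw [hfilter, Finset.sum_mul]
            _ = (if Nat.Coprime n (m : ℕ) then (moebius (m : ℕ) : ℝ) / ((m : ℕ) : ℝ) ^ s else 0) := by
                rw [hmoeb_sum _ (fun hg => hn0 (Nat.gcd_eq_zero_iff.mp hg).1)]
                unfold Nat.Coprime
                by_cases h : Nat.gcd n (m : ℕ) = 1 <;> simp [h]
  -- key identity: n^s * F n = μ n * G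
  have h3 : (n : ℝ) ^ s * F n = (moebius n : ℝ) * G := by
    rw [hF, hG, ← tsum_mul_left, ← tsum_mul_left]
    refine tsum_congr fun c => ?_
    have hc0 : (0 : ℝ) < ((c : ℕ) : ℝ) := by exact_mod_cast c.pos
    have hn0' : (0 : ℝ) < (n : ℝ) := by exact_mod_cast Nat.pos_of_ne_zero hn0
    by_cases h : Nat.Coprime n (c : ℕ)
    · rw [if_pos h]
      have hmul : moebius ((c : ℕ) * n) = moebius (c : ℕ) * moebius n :=
        isMultiplicative_moebius.map_mul_of_coprime h.symm
      have hcast : (((c : ℕ) * n : ℕ) : ℝ) = ((c : ℕ) : ℝ) * (n : ℝ) := by push_cast; ring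
      rw [hmul, hcast, Real.mul_rpow hc0.le hn0'.le]
      have h1 : ((c : ℕ) : ℝ) ^ s ≠ 0 := (Real.rpow_pos_of_pos hc0 s).ne'
      have h2 : (n : ℝ) ^ s ≠ 0 := (Real.rpow_pos_of_pos hn0' s).ne'
      push_cast
      field_simp
    · rw [if_neg h]
      have hnsq : ¬ Squarefree ((c : ℕ) * n) := fun hsq =>
        h (Nat.squarefree_mul_iff.mp hsq).1.symm
      rw [moebius_eq_zero_of_not_squarefree hnsq]
      simp
  -- split divisors
  have e2 : G = (∑ d ∈ n.properDivisors, (moebius d : ℝ) * F d) + (moebius n : ℝ) * F n := by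
    rw [← hswap, ← Nat.cons_self_properDivisors hn0, Finset.sum_cons, add_comm]
  have hns : (1 : ℝ) < (n : ℝ) ^ s := by
    have h1 : (1 : ℝ) < (n : ℝ) := by exact_mod_cast hn
    calc (1 : ℝ) = (n : ℝ) ^ (0 : ℝ) := (Real.rpow_zero _).symm
    _ < (n : ℝ) ^ s := Real.rpow_lt_rpow_left_iff h1 |>.mpr (by linarith)
  have hXne : (n : ℝ) ^ s - 1 ≠ 0 := by linarith
  have key : F n = (moebius n : ℝ) / ((n : ℝ) ^ s - 1) *
      ∑ d ∈ n.properDivisors, (moebius d : ℝ) * F d := by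
    by_cases hsf : Squarefree n
    · have e3 : (moebius n : ℝ) * (moebius n : ℝ) = 1 := by
        have h := moebius_sq_eq_one_of_squarefree hsf
        calc (moebius n : ℝ) * (moebius n : ℝ) = ((moebius n ^ 2 : ℤ) : ℝ) := by push_cast; ring
          _ = 1 := by rw [h]; norm_num
      have h4 : ((n : ℝ) ^ s - 1) * F n =
          (moebius n : ℝ) * ∑ d ∈ n.properDivisors, (moebius d : ℝ) * F d := by
        linear_combination h3 + (moebius n : ℝ) * e2 + F n * e3
      rw [div_mul_eq_mul_div, eq_div_iff hXne]
      linarith [h4]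
    · have hFn : F n = 0 := by
        have hz : ∀ c : ℕ+, (moebius ((c : ℕ) * n) : ℝ) / (((c : ℕ) * n : ℕ) : ℝ) ^ s = 0 := by
          intro c
          have : ¬ Squarefree ((c : ℕ) * n) := fun hsq =>
            hsf (Nat.squarefree_mul_iff.mp hsq).2.2
          rw [moebius_eq_zero_of_not_squarefree this]
          simp
        show (∑' c : ℕ+, (moebius ((c : ℕ) * n) : ℝ) / (((c : ℕ) * n : ℕ) : ℝ) ^ s) = 0
        rw [tsum_congr hz, tsum_zero]
      rw [hFn, moebius_eq_zero_of_not_squarefree hsf]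
      simp
  calc ∑' c : ℕ+, (moebius (n * c) : ℝ) / ((n * c : ℕ) : ℝ) ^ s = F n := hLHS
    _ = (moebius n : ℝ) / ((n : ℝ) ^ s - 1) *
        ∑ d ∈ n.properDivisors, (moebius d : ℝ) * F d := key
    _ = _ := by simp only [hF]
end

section
/- Let k be an integer and define the weight-k Hecke operator on formal q-expansions of level N by (Σ_{n∈ℤ} a_n q^n)|T_m = Σ_{n∈ℤ} (Σ_{d | gcd(m,n), gcd(d,N)=1} d^{k−1} a_{mn/d²}) q^n. If f has expansion q^{−ν} + O(q) (i.e. a_{−ν} = 1, a_n = 0 for −ν < n ≤ 0 and for n < −ν), and m is a positive integer with gcd(m, ν) = 1 and gcd(m, N) = 1, then m^{1−k}·(f|T_m) has expansion q^{−mν} + O(q), i.e. its coefficient at −mν is 1 and all other coefficients of index ≤ 0 vanish. -/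
open Finset

/-- Elementary number theory: if `d ∣ m`, `d ∣ n'`, `gcd(m,ν)=1` and
`m n' = ν d²`, then `n' = m ν` and `d = m`. -/
lemma hecke_aux_nat (m ν d n' : ℕ) (hm : 0 < m) (hmν : Nat.gcd m ν = 1)
    (hdm : d ∣ m) (hdn : d ∣ n') (h : m * n' = ν * d ^ 2) :
    n' = m * ν ∧ d = m := by
  have hd0 : 0 < d := Nat.pos_of_dvd_of_pos hdm hm
  have hco : Nat.Coprime m ν := hmν
  have hmd2 : m ∣ d ^ 2 := by
    have h1 : m ∣ ν * d ^ 2 := ⟨n', h.symm⟩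
    exact hco.dvd_of_dvd_mul_left h1
  obtain ⟨c, hc⟩ := hdm
  have hc0 : 0 < c := Nat.pos_of_ne_zero (by rintro rfl; omega)
  have hcd : c ∣ d := by
    rw [hc, pow_two] at hmd2
    exact (Nat.mul_dvd_mul_iff_left hd0).mp hmd2
  obtain ⟨t, ht⟩ := hcd
  have ht0 : 0 < t := Nat.pos_of_ne_zero (by rintro rfl; omega)
  have h2 : d * (c * n') = d * (ν * d) := by
    rw [hc, pow_two] at h; ring_nf at h ⊢; linarith
  have h3 : c * n' = ν * d := Nat.eq_of_mul_eq_mul_left hd0 h2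
  have h4 : n' = ν * t := by
    have : c * n' = c * (ν * t) := by rw [h3, ht]; ring
    exact Nat.eq_of_mul_eq_mul_left hc0 this
  have hcν : c ∣ ν := by
    have hdn' : c * t ∣ ν * t := by rw [← ht, ← h4]; exact hdn
    exact (Nat.mul_dvd_mul_iff_right ht0).mp hdn'
  have hc1 : c = 1 := Nat.dvd_one.mp (hmν ▸ Nat.dvd_gcd ⟨d, by rw [hc]; ring⟩ hcν)
  have hdm' : d = m := by rw [hc, hc1, mul_one]
  refine ⟨?_, hdm'⟩
  have : n' = ν * d := by rw [← h3, hc1, one_mul]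
  rw [this, hdm']; ring

/-- Lemma on Hecke operators acting on q-expansions: if `f = q^{-ν} + O(q)` and
`gcd(m,ν) = gcd(m,N) = 1`, then `m^{1-k} f|T_m = q^{-mν} + O(q)`. -/
theorem hecke_principal_part (k : ℤ) (N m ν : ℕ) (hm : 0 < m) (hν : 0 < ν)
    (hmν : Nat.gcd m ν = 1) (hmN : Nat.gcd m N = 1)
    (a : ℤ → ℂ) (ha1 : a (-(ν : ℤ)) = 1)
    (ha0 : ∀ n : ℤ, n ≤ 0 → n ≠ -(ν : ℤ) → a n = 0)
    (T : ℤ → ℂ)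
    (hT : ∀ n : ℤ, T n = ∑ d ∈ (Nat.gcd m n.natAbs).divisors,
        if Nat.Coprime d N then (d : ℂ) ^ (k - 1) * a ((m * n) / ((d : ℤ) ^ 2)) else 0) :
    (m : ℂ) ^ (1 - k) * T (-(m * ν : ℕ)) = 1 ∧
      ∀ n : ℤ, n ≤ 0 → n ≠ -((m * ν : ℕ) : ℤ) → (m : ℂ) ^ (1 - k) * T n = 0 := by
  have hmC : (m : ℂ) ≠ 0 := Nat.cast_ne_zero.mpr hm.ne'
  constructor
  · rw [hT]
    have hgcd : Nat.gcd m ((-((m * ν : ℕ) : ℤ)).natAbs) = m := by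
      simp only [Int.natAbs_neg, Int.natAbs_natCast]
      exact Nat.gcd_eq_left ⟨ν, rfl⟩
    rw [hgcd, Finset.sum_eq_single_of_mem m (Nat.mem_divisors_self m hm.ne')]
    · rw [if_pos hmN]
      have hmz : ((m : ℤ)) ^ 2 ≠ 0 := by positivity
      have harg : ((m : ℤ) * (-((m * ν : ℕ) : ℤ))) / ((m : ℤ)) ^ 2 = -(ν : ℤ) := by
        have h1 : ((m : ℤ) * (-((m * ν : ℕ) : ℤ))) = ((m : ℤ)) ^ 2 * (-(ν : ℤ)) := by
          push_cast; ring
        rw [h1, Int.mul_ediv_cancel_left _ hmz]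
      rw [harg, ha1, mul_one, ← zpow_add₀ hmC]
      norm_num
    · intro d hd hne
      have hdm : d ∣ m := (Nat.mem_divisors.mp hd).1
      by_cases hco : Nat.Coprime d N
      · rw [if_pos hco]
        have hd0 : 0 < d := Nat.pos_of_mem_divisors hd
        have hdz : ((d : ℤ)) ^ 2 ≠ 0 := by positivity
        obtain ⟨e, he⟩ := hdm
        have hdvd2 : ((d : ℤ)) ^ 2 ∣ (m : ℤ) * (-((m * ν : ℕ) : ℤ)) := by
          refine ⟨-((e : ℤ) ^ 2 * ν), ?_⟩
          push_cast [he]; ring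
        obtain ⟨c, hcc⟩ := hdvd2
        rw [hcc, Int.mul_ediv_cancel_left _ hdz]
        have hd2pos : (0 : ℤ) < (d : ℤ) ^ 2 := by positivity
        have hle : (m : ℤ) * (-((m * ν : ℕ) : ℤ)) ≤ 0 := by
          simp only [mul_neg, neg_nonpos]; positivity
        have hcle : c ≤ 0 := by nlinarith [hcc ▸ hle]
        have hcne : c ≠ -(ν : ℤ) := by
          intro hceq
          subst hceq
          have hnat : m * (m * ν) = ν * d ^ 2 := by
            have hint : ((m * (m * ν) : ℕ) : ℤ) = ((ν * d ^ 2 : ℕ) : ℤ) := by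
              have hcc' := hcc
              push_cast at hcc'
              push_cast
              linarith
            exact_mod_cast hint
          have := hecke_aux_nat m ν d (m * ν) hm hmν ⟨e, he⟩ (Dvd.dvd.mul_right ⟨e, he⟩ ν) hnat
          exact hne this.2
        rw [ha0 c hcle hcne, mul_zero]
      · rw [if_neg hco]
  · intro n hn hne
    rw [hT n, Finset.sum_eq_zero, mul_zero]
    intro d hd
    have hdg : d ∣ Nat.gcd m n.natAbs := (Nat.mem_divisors.mp hd).1
    have hdm : d ∣ m := hdg.trans (Nat.gcd_dvd_left _ _)
    have hdn : d ∣ n.natAbs := hdg.trans (Nat.gcd_dvd_right _ _)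
    by_cases hco : Nat.Coprime d N
    · rw [if_pos hco]
      have hd0 : 0 < d := Nat.pos_of_mem_divisors hd
      have hdz : ((d : ℤ)) ^ 2 ≠ 0 := by positivity
      have hdnZ : (d : ℤ) ∣ n := Int.natAbs_dvd_natAbs.mp (by simpa using hdn)
      have hdvd2 : ((d : ℤ)) ^ 2 ∣ (m : ℤ) * n := by
        rw [sq]
        exact mul_dvd_mul (Int.natCast_dvd_natCast.mpr hdm) hdnZ
      obtain ⟨c, hcc⟩ := hdvd2
      rw [hcc, Int.mul_ediv_cancel_left _ hdz]
      have hd2pos : (0 : ℤ) < (d : ℤ) ^ 2 := by positivity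
      have hle : (m : ℤ) * n ≤ 0 :=
        mul_nonpos_of_nonneg_of_nonpos (by positivity) hn
      have hcle : c ≤ 0 := by nlinarith [hcc ▸ hle]
      have hcne : c ≠ -(ν : ℤ) := by
        intro hceq
        subst hceq
        have habs : ((n.natAbs : ℤ)) = -n := by omega
        have hnat : m * n.natAbs = ν * d ^ 2 := by
          have hint : ((m * n.natAbs : ℕ) : ℤ) = ((ν * d ^ 2 : ℕ) : ℤ) := by
            have hcc' := hcc
            push_cast at hcc'
            push_cast [habs]
            linarith
          exact_mod_cast hint
        have := hecke_aux_nat m ν d n.natAbs hm hmν hdm hdn hnat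
        have h1 := this.1
        omega
      rw [ha0 c hcle hcne, mul_zero]
    · rw [if_neg hco]
end
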